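/- (Cayley–Menger type formula for EMD) For any x = (x¹,...,x^d) ∈ (P_n)^d, one has EMD(x) = (1/(d-1)) · [G''(x;1) + ∑_{1 ≤ k < ℓ ≤ d} EMD(x^k, x^ℓ)], where G''(x;1) = ∑_{j=1}^n ∑_{i=1}^{d-1} wt(i)(wt(i)-1)·ΔX^{(i)}_j. -/

import Mathlib

open Finset

/-- The cumulative sum `X_j = x₁ + ⋯ + x_j` of `x ∈ ℝ^{n+1}`. -/
noncomputable def cdf {n : ℕ} (x : Fin (n + 1) → ℝ) (j : ℕ) : ℝ :=
  ∑ k : Fin (n + 1), if (k : ℕ) < j then x k else 0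

/-- The `i`-th smallest component (0-indexed) of the tuple `y`. -/
noncomputable def sortedNth {d : ℕ} (y : Fin d → ℝ) (i : ℕ) : ℝ :=
  if h : i < d then y (Tuple.sort y ⟨i, h⟩) else 0

/-- Cayley–Menger type formula for the EMD:
`EMD(x) = (1/(d-1)) [G''(x;1) + ∑_{k<ℓ} EMD(x^k, x^ℓ)]`, where
`EMD(x) = ∑_j ∑_i wt(i) ΔX^{(i)}_j`,
`G''(x;1) = ∑_j ∑_i wt(i)(wt(i)-1) ΔX^{(i)}_j`, and
`EMD(x^k, x^ℓ) = ∑_j |X^k_j - X^ℓ_j|`. -/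
private lemma tele (g : ℕ → ℝ) : ∀ b a : ℕ, a ≤ b →
    ∑ i ∈ Finset.Ioc a b, (g i - g (i - 1)) = g b - g a := by
  intro b
  induction b with
  | zero => intro a ha; interval_cases a; simp
  | succ b ih =>
    intro a ha
    rcases Nat.eq_or_lt_of_le ha with h | h
    · subst h; simp
    · have ha' : a ≤ b := Nat.lt_succ_iff.mp h
      rw [Finset.sum_Ioc_succ_top ha', ih a ha']
      simp

private lemma half_sum {d : ℕ} (f : Fin d → Fin d → ℝ)
    (hsym : ∀ a b, f a b = f b a) (hdiag : ∀ a, f a a = 0) :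
    ∑ p ∈ Finset.univ.filter (fun p : Fin d × Fin d => p.1 < p.2), f p.1 p.2
      = (∑ a, ∑ b, f a b) / 2 := by
  have hswap : ∑ p ∈ Finset.univ.filter (fun p : Fin d × Fin d => p.2 < p.1), f p.1 p.2
      = ∑ p ∈ Finset.univ.filter (fun p : Fin d × Fin d => p.1 < p.2), f p.1 p.2 := by
    refine Finset.sum_nbij' (fun p => Prod.swap p) (fun p => Prod.swap p) ?_ ?_ ?_ ?_ ?_ <;>
      simp +contextual [hsym]
  have key : ∑ a, ∑ b, f a b
      = ∑ p ∈ Finset.univ.filter (fun p : Fin d × Fin d => p.1 < p.2), f p.1 p.2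
        + ∑ p ∈ Finset.univ.filter (fun p : Fin d × Fin d => p.2 < p.1), f p.1 p.2 := by
    have e0 : (Finset.univ : Finset (Fin d × Fin d)) = Finset.univ ×ˢ Finset.univ :=
      Finset.univ_product_univ.symm
    rw [← Finset.sum_product', ← e0,
      ← Finset.sum_filter_add_sum_filter_not Finset.univ
        (fun p : Fin d × Fin d => p.1 < p.2) (fun p => f p.1 p.2)]
    congr 1
    rw [← Finset.sum_filter_add_sum_filter_not
        (Finset.univ.filter fun p : Fin d × Fin d => ¬ p.1 < p.2)
        (fun p => p.2 < p.1) (fun p => f p.1 p.2),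
      Finset.filter_filter, Finset.filter_filter]
    have h1 : (Finset.univ.filter fun p : Fin d × Fin d => ¬ p.1 < p.2 ∧ p.2 < p.1)
        = Finset.univ.filter fun p : Fin d × Fin d => p.2 < p.1 := by
      ext p
      simp only [Finset.mem_filter, Finset.mem_univ, true_and]
      exact ⟨fun h => h.2, fun h => ⟨lt_asymm h, h⟩⟩
    have h2 : ∑ p ∈ (Finset.univ.filter
        fun p : Fin d × Fin d => ¬ p.1 < p.2 ∧ ¬ p.2 < p.1), f p.1 p.2 = 0 := by
      refine Finset.sum_eq_zero fun p hp => ?_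
      simp only [Finset.mem_filter, Finset.mem_univ, true_and, not_lt] at hp
      have : p.1 = p.2 := le_antisymm hp.2 hp.1
      rw [this, hdiag]
    rw [h1, h2, add_zero]
  linarith [key, hswap]

private lemma card_pairs {d i : ℕ} (h1 : 1 ≤ i) (h2 : i < d) :
    (Finset.univ.filter fun p : Fin d × Fin d => (p.1 : ℕ) < i ∧ i ≤ (p.2 : ℕ)).card
      = i * (d - i) := by
  set ι : Fin d := ⟨i, h2⟩ with hι
  have hprod : (Finset.univ.filter fun p : Fin d × Fin d => (p.1 : ℕ) < i ∧ i ≤ (p.2 : ℕ))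
      = (Finset.univ.filter fun a : Fin d => a < ι)
          ×ˢ (Finset.univ.filter fun b : Fin d => ι ≤ b) := by
    ext p
    simp [Finset.mem_product, Fin.lt_def, Fin.le_def, hι]
  rw [hprod, Finset.card_product]
  have hIio : (Finset.univ.filter fun a : Fin d => a < ι) = Finset.Iio ι := by
    ext a; simp
  have hIci : (Finset.univ.filter fun b : Fin d => ι ≤ b) = Finset.Ici ι := by
    ext a; simp
  rw [hIio, hIci, Fin.card_Iio, Fin.card_Ici]

private lemma pair_abs {d : ℕ} (y : Fin d → ℝ) :
    ∑ p ∈ Finset.univ.filter (fun p : Fin d × Fin d => p.1 < p.2), |y p.1 - y p.2|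
      = ∑ i ∈ Finset.Ico 1 d, ((i : ℝ) * ((d - i : ℕ) : ℝ))
          * (sortedNth y i - sortedNth y (i - 1)) := by
  set σ := Tuple.sort y with hσ
  have hmono : Monotone (y ∘ σ) := Tuple.monotone_sort y
  have h1 : ∑ p ∈ Finset.univ.filter (fun p : Fin d × Fin d => p.1 < p.2), |y p.1 - y p.2|
      = ∑ p ∈ Finset.univ.filter (fun p : Fin d × Fin d => p.1 < p.2),
          |y (σ p.1) - y (σ p.2)| := by
    rw [half_sum (fun a b => |y a - y b|) (fun a b => abs_sub_comm _ _) (fun a => by simp),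
        half_sum (fun a b => |y (σ a) - y (σ b)|) (fun a b => abs_sub_comm _ _)
          (fun a => by simp)]
    congr 1
    calc ∑ a, ∑ b, |y a - y b|
        = ∑ a, ∑ b, |y a - y (σ b)| := by
          exact Finset.sum_congr rfl fun a _ => (Equiv.sum_comp σ (fun b => |y a - y b|)).symm
      _ = ∑ a, ∑ b, |y (σ a) - y (σ b)| :=
          (Equiv.sum_comp σ (fun a => ∑ b, |y a - y (σ b)|)).symm
  rw [h1]
  have hs : ∀ a : Fin d, sortedNth y (a : ℕ) = y (σ a) := by
    intro a; simp [sortedNth, a.isLt, hσ]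
  have h2 : ∀ p : Fin d × Fin d, p.1 < p.2 →
      |y (σ p.1) - y (σ p.2)| = ∑ i ∈ Finset.Ico 1 d,
        if (p.1 : ℕ) < i ∧ i ≤ (p.2 : ℕ) then sortedNth y i - sortedNth y (i - 1) else 0 := by
    intro p hp
    have hval : (p.1 : ℕ) ≤ (p.2 : ℕ) := le_of_lt hp
    have hm : y (σ p.1) ≤ y (σ p.2) := hmono (le_of_lt hp)
    have habs : |y (σ p.1) - y (σ p.2)| = y (σ p.2) - y (σ p.1) := by
      rw [abs_sub_comm, abs_of_nonneg (sub_nonneg.mpr hm)]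
    rw [habs, ← hs, ← hs, ← tele (fun i => sortedNth y i) (p.2 : ℕ) (p.1 : ℕ) hval,
      ← Finset.sum_filter]
    congr 1
    ext i
    simp only [Finset.mem_filter, Finset.mem_Ico, Finset.mem_Ioc]
    have := p.2.isLt
    omega
  rw [Finset.sum_congr rfl (fun p hp => h2 p (by simpa using (Finset.mem_filter.mp hp).2)),
    Finset.sum_comm]
  refine Finset.sum_congr rfl fun i hi => ?_
  simp only [Finset.mem_Ico] at hi
  rw [← Finset.sum_filter, Finset.filter_filter]
  have hset : (Finset.univ.filter
        fun p : Fin d × Fin d => p.1 < p.2 ∧ ((p.1 : ℕ) < i ∧ i ≤ (p.2 : ℕ)))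
      = Finset.univ.filter fun p : Fin d × Fin d => (p.1 : ℕ) < i ∧ i ≤ (p.2 : ℕ) := by
    ext p
    simp only [Finset.mem_filter, Finset.mem_univ, true_and, Fin.lt_def]
    omega
  rw [hset, Finset.sum_const, card_pairs hi.1 hi.2, nsmul_eq_mul]
  push_cast
  ring

theorem stmt13 (n d : ℕ) (hn : 1 ≤ n) (hd : 2 ≤ d) (x : Fin d → Fin (n + 1) → ℝ)
    (hx : ∀ i, (∀ k, 0 ≤ x i k) ∧ ∑ k, x i k = 1) :
    ∑ j ∈ Finset.Icc 1 n, ∑ i ∈ Finset.Ico 1 d, (min i (d - i) : ℝ)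
        * (sortedNth (fun i' => cdf (x i') j) i - sortedNth (fun i' => cdf (x i') j) (i - 1))
      = (1 / (d - 1 : ℝ))
        * ((∑ j ∈ Finset.Icc 1 n, ∑ i ∈ Finset.Ico 1 d,
              (min i (d - i) : ℝ) * ((min i (d - i) : ℝ) - 1)
                * (sortedNth (fun i' => cdf (x i') j) i
                    - sortedNth (fun i' => cdf (x i') j) (i - 1)))
          + ∑ p ∈ Finset.univ.filter (fun p : Fin d × Fin d => p.1 < p.2),
              ∑ j ∈ Finset.Icc 1 n, |cdf (x p.1) j - cdf (x p.2) j|) := by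
  have hd1 : (d : ℝ) - 1 ≠ 0 := by
    have h2 : (2 : ℝ) ≤ (d : ℝ) := by exact_mod_cast hd
    linarith
  have hC : ∑ p ∈ Finset.univ.filter (fun p : Fin d × Fin d => p.1 < p.2),
        ∑ j ∈ Finset.Icc 1 n, |cdf (x p.1) j - cdf (x p.2) j|
      = ∑ j ∈ Finset.Icc 1 n, ∑ i ∈ Finset.Ico 1 d, ((i : ℝ) * ((d - i : ℕ) : ℝ))
          * (sortedNth (fun i' => cdf (x i') j) i
              - sortedNth (fun i' => cdf (x i') j) (i - 1)) := by
    rw [Finset.sum_comm]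
    exact Finset.sum_congr rfl fun j _ => pair_abs (fun i' => cdf (x i') j)
  rw [hC]
  have key : (∑ j ∈ Finset.Icc 1 n, ∑ i ∈ Finset.Ico 1 d,
        (min i (d - i) : ℝ) * ((min i (d - i) : ℝ) - 1)
          * (sortedNth (fun i' => cdf (x i') j) i
              - sortedNth (fun i' => cdf (x i') j) (i - 1)))
      + ∑ j ∈ Finset.Icc 1 n, ∑ i ∈ Finset.Ico 1 d, ((i : ℝ) * ((d - i : ℕ) : ℝ))
          * (sortedNth (fun i' => cdf (x i') j) i
              - sortedNth (fun i' => cdf (x i') j) (i - 1))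
      = ((d : ℝ) - 1) * ∑ j ∈ Finset.Icc 1 n, ∑ i ∈ Finset.Ico 1 d, (min i (d - i) : ℝ)
          * (sortedNth (fun i' => cdf (x i') j) i
              - sortedNth (fun i' => cdf (x i') j) (i - 1)) := by
    rw [Finset.mul_sum, ← Finset.sum_add_distrib]
    refine Finset.sum_congr rfl fun j _ => ?_
    rw [Finset.mul_sum, ← Finset.sum_add_distrib]
    refine Finset.sum_congr rfl fun i hi => ?_
    simp only [Finset.mem_Ico] at hi
    have hcast : ((d - i : ℕ) : ℝ) = (d : ℝ) - (i : ℝ) := by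
      rw [Nat.cast_sub hi.2.le]
    rw [hcast]
    rcases le_total (i : ℝ) ((d : ℝ) - i) with h | h
    · rw [min_eq_left h]; ring
    · rw [min_eq_right h]; ring
  rw [key, one_div, inv_mul_cancel_left₀ hd1]
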